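/- (Multiple Neural Forecasting Proposition, univariate bound) Let c ≥ 1 and T ≥ 1 be integers. For each t = 1,...,T, let {y_t^{(i)}}_{i=1}^c be independent random variables with common mean μ̂_t, all bounded by λ in absolute value. Assume sup_t |μ̂_t - μ_t| ≤ b and |x_t - μ_t| ≤ σ for all t. Then there exists a realization {ỹ_t^{(i)}} such that ∑_{t=1}^T |x_t - (1/c)∑_{i=1}^c ỹ_t^{(i)}| ≤ T(λ + √c(b + σ))/√c. -/

import Mathlib

open MeasureTheory ProbabilityTheory Finset

/-- Multiple Neural Forecasting Proposition (univariate bound): with, for each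
timestep `t`, `c` independent candidate forecasts of common mean `muhat t` bounded
by `lam`, a predictive bias bound `b` and an observation noise bound `σ`, there is
a realization of the candidates whose per-timestep averages approximate the
observations with total `ℓ¹` error at most `T (lam + √c (b + σ)) / √c`. -/
theorem multiple_neural_forecasting_proposition
    {Ω : Type*} [MeasurableSpace Ω] (μ : Measure Ω) [IsProbabilityMeasure μ]
    (T c : ℕ) (hT : 0 < T) (hc : 0 < c)
    (lam b σ : ℝ) (hlam : 0 < lam) (hb : 0 ≤ b) (hσ : 0 ≤ σ)
    (y : Fin T → Fin c → Ω → ℝ)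
    (x mu muhat : Fin T → ℝ)
    (hmeas : ∀ t i, Measurable (y t i))
    (hindep : ∀ t, iIndepFun (y t) μ)
    (hident : ∀ t i j, IdentDistrib (y t i) (y t j) μ μ)
    (hmean : ∀ t i, ∫ ω, y t i ω ∂μ = muhat t)
    (hbdd : ∀ t i, ∀ᵐ ω ∂μ, |y t i ω| ≤ lam)
    (hbias : ∀ t, |muhat t - mu t| ≤ b)
    (hnoise : ∀ t, |x t - mu t| ≤ σ) :
    ∃ ytilde : Fin T → Fin c → ℝ,
      (∀ t, ∃ ω, ∀ i, ytilde t i = y t i ω) ∧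
      ∑ t, |x t - (1 / (c : ℝ)) * ∑ i, ytilde t i|
        ≤ (T : ℝ) * (lam + Real.sqrt c * (b + σ)) / Real.sqrt c := by
  have hc0 : (0 : ℝ) < c := by exact_mod_cast hc
  have hsc : (0 : ℝ) < Real.sqrt c := Real.sqrt_pos.2 hc0
  -- per-timestep existence
  have key : ∀ t : Fin T, ∃ ω : Ω,
      |x t - (1 / (c : ℝ)) * ∑ i, y t i ω| ≤ lam / Real.sqrt c + (b + σ) := by
    intro t
    have hmem : ∀ i : Fin c, MemLp (y t i) 2 μ := fun i =>
      MemLp.of_bound (hmeas t i).aestronglyMeasurable lam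
        ((hbdd t i).mono fun ω h => by simpa [Real.norm_eq_abs] using h)
    set S : Ω → ℝ := fun ω => ∑ i, y t i ω with hS
    have hSfun : S = ∑ i : Fin c, y t i := by funext ω; simp [S]
    have hSmem : MemLp S 2 μ := by
      rw [hSfun]; exact memLp_finset_sum' (μ := μ) Finset.univ (fun i _ => hmem i)
    -- variance of each y t i is at most lam ^ 2
    have hvar : ∀ i : Fin c, variance (y t i) μ ≤ lam ^ 2 := by
      intro i
      refine (variance_le_expectation_sq (hmeas t i).aestronglyMeasurable).trans ?_
      have hint : Integrable (fun ω => y t i ω ^ 2) μ := by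
        simpa [Pi.pow_apply] using (hmem i).integrable_sq
      calc ∫ ω, (y t i ^ 2) ω ∂μ ≤ ∫ _ω, lam ^ 2 ∂μ := by
            refine integral_mono_ae hint (integrable_const _) ?_
            exact (hbdd t i).mono fun ω h => by
              have := sq_le_sq' (neg_le_of_abs_le h) (le_of_abs_le h)
              simpa using this
        _ = lam ^ 2 := by simp
    -- variance of the sum
    have hvarS : variance S μ ≤ (c : ℝ) * lam ^ 2 := by
      have := IndepFun.variance_sum (μ := μ) (X := y t) (s := Finset.univ)
        (fun i _ => hmem i)
        (fun i _ j _ hij => (hindep t).indepFun hij)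
      rw [hSfun]
      calc variance (∑ i : Fin c, y t i) μ = ∑ i : Fin c, variance (y t i) μ := this
        _ ≤ ∑ _i : Fin c, lam ^ 2 := Finset.sum_le_sum fun i _ => hvar i
        _ = (c : ℝ) * lam ^ 2 := by simp [mul_comm]
    -- mean of the sum
    have hmeanS : ∫ ω, S ω ∂μ = (c : ℝ) * muhat t := by
      rw [hS]
      rw [integral_finset_sum _ (fun i _ => (hmem i).integrable one_le_two)]
      simp [hmean t, mul_comm]
    -- variance as integral
    have hvareq : variance S μ = ∫ ω, (S ω - (c : ℝ) * muhat t) ^ 2 ∂μ := by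
      have := variance_eq_integral hSmem.1.aemeasurable
      rw [this, hmeanS]
    have hgint : Integrable (fun ω => (S ω - (c : ℝ) * muhat t) ^ 2) μ := by
      have : MemLp (fun ω => S ω - (c : ℝ) * muhat t) 2 μ :=
        hSmem.sub (memLp_const _)
      simpa [Pi.pow_apply] using this.integrable_sq
    obtain ⟨ω, hω⟩ := exists_le_integral (μ := μ) hgint
    refine ⟨ω, ?_⟩
    have hωbound : (S ω - (c : ℝ) * muhat t) ^ 2 ≤ (Real.sqrt c * lam) ^ 2 := by
      have h1 : (Real.sqrt c * lam) ^ 2 = (c : ℝ) * lam ^ 2 := by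
        rw [mul_pow, Real.sq_sqrt hc0.le]
      rw [h1]
      exact hω.trans (by rw [← hvareq]; exact hvarS)
    have habs : |S ω - (c : ℝ) * muhat t| ≤ Real.sqrt c * lam := by
      rw [← Real.sqrt_sq_eq_abs]
      exact (Real.sqrt_le_sqrt hωbound).trans_eq (Real.sqrt_sq (by positivity))
    have havg : |(1 / (c : ℝ)) * S ω - muhat t| ≤ lam / Real.sqrt c := by
      have : (1 / (c : ℝ)) * S ω - muhat t = (1 / (c : ℝ)) * (S ω - (c : ℝ) * muhat t) := by
        field_simp
      rw [this, abs_mul, abs_of_pos (by positivity : (0:ℝ) < 1 / (c:ℝ))]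
      calc 1 / (c : ℝ) * |S ω - (c : ℝ) * muhat t| ≤ 1 / (c : ℝ) * (Real.sqrt c * lam) :=
            by gcongr
        _ = lam / Real.sqrt c := by
            rw [eq_div_iff hsc.ne']
            have : Real.sqrt c * Real.sqrt c = (c : ℝ) := Real.mul_self_sqrt hc0.le
            field_simp
            nlinarith [this]
    calc |x t - (1 / (c : ℝ)) * ∑ i, y t i ω|
        = |(x t - mu t) + (mu t - muhat t) + (muhat t - (1 / (c : ℝ)) * S ω)| := by
          rw [hS]; ring_nf
      _ ≤ |x t - mu t| + |mu t - muhat t| + |muhat t - (1 / (c : ℝ)) * S ω| := by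
          exact (abs_add_le _ _).trans (by gcongr; exact abs_add_le _ _)
      _ ≤ σ + b + lam / Real.sqrt c := by
          gcongr
          · exact hnoise t
          · rw [abs_sub_comm]; exact hbias t
          · rw [abs_sub_comm]; exact havg
      _ = lam / Real.sqrt c + (b + σ) := by ring
  choose ω hω using key
  refine ⟨fun t i => y t i (ω t), fun t => ⟨ω t, fun i => rfl⟩, ?_⟩
  calc ∑ t, |x t - (1 / (c : ℝ)) * ∑ i, y t i (ω t)|
      ≤ ∑ _t : Fin T, (lam / Real.sqrt c + (b + σ)) :=
        Finset.sum_le_sum fun t _ => hω t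
    _ = (T : ℝ) * (lam / Real.sqrt c + (b + σ)) := by
        simp [Finset.sum_const, nsmul_eq_mul]; ring
    _ = (T : ℝ) * ((lam + Real.sqrt c * (b + σ)) / Real.sqrt c) := by
        rw [add_div, mul_div_cancel_left₀ _ hsc.ne']
    _ = (T : ℝ) * (lam + Real.sqrt c * (b + σ)) / Real.sqrt c := by ring
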